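/- If q_0, q_1, ..., q_k are real numbers with |q_0| + |q_1| + ... + |q_k| < 1, then every (complex) root of λ^{k+1} - q_0·λ^k - q_1·λ^{k-1} - ... - q_k = 0 satisfies |λ| < 1. -/

import Mathlib

theorem stmt_14 (k : ℕ) (q : ℕ → ℝ)
    (hq : ∑ i ∈ Finset.range (k + 1), |q i| < 1) :
    ∀ lam : ℂ,
      lam ^ (k + 1) - ∑ i ∈ Finset.range (k + 1), (q i : ℂ) * lam ^ (k - i) = 0 →
      ‖lam‖ < 1 := by
  intro lam heq
  by_contra h
  push_neg at h
  set a := ‖lam‖ with ha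
  have heq' : lam ^ (k + 1) = ∑ i ∈ Finset.range (k + 1), (q i : ℂ) * lam ^ (k - i) := by
    linear_combination heq
  have hpos : (0:ℝ) < a ^ (k + 1) := pow_pos (lt_of_lt_of_le one_pos h) _
  have key : a ^ (k + 1) ≤ (∑ i ∈ Finset.range (k + 1), |q i|) * a ^ (k + 1) := by
    calc a ^ (k + 1) = ‖lam ^ (k + 1)‖ := (norm_pow _ _).symm
      _ = ‖∑ i ∈ Finset.range (k + 1), (q i : ℂ) * lam ^ (k - i)‖ := by
          rw [heq']
      _ ≤ ∑ i ∈ Finset.range (k + 1), ‖(q i : ℂ) * lam ^ (k - i)‖ := by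
          simpa using norm_sum_le (Finset.range (k + 1)) (fun i => (q i : ℂ) * lam ^ (k - i))
      _ ≤ ∑ i ∈ Finset.range (k + 1), |q i| * a ^ (k + 1) := by
          apply Finset.sum_le_sum
          intro i _
          rw [norm_mul, norm_pow, Complex.norm_real, Real.norm_eq_abs]
          exact mul_le_mul_of_nonneg_left
            (pow_le_pow_right₀ h (by omega)) (abs_nonneg _)
      _ = (∑ i ∈ Finset.range (k + 1), |q i|) * a ^ (k + 1) := by
          rw [Finset.sum_mul]
  nlinarith [key, hpos, hq]
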